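/- In any edge coloring of a complete graph (on at least 2 vertices) containing no rainbow triangle, there exists a nontrivial partition of the vertex set into at least two parts such that at most two colors appear on edges between distinct parts, and for each pair of distinct parts all edges between them have a single color. -/

import Mathlib

open Finset

/-- A symmetric edge-coloring of a complete graph, given as a function on ordered
pairs of vertices. -/
def IsSymmColoring {V C : Type*} (c : V → V → C) : Prop := ∀ u v, c u v = c v u

/-- The coloring `c` contains a rainbow triangle: three vertices whose three
connecting edges get three distinct colors. -/
def HasRainbowTriangle {V C : Type*} (c : V → V → C) : Prop :=
  ∃ u v w : V, u ≠ v ∧ u ≠ w ∧ v ≠ w ∧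
    c u v ≠ c u w ∧ c u v ≠ c v w ∧ c u w ≠ c v w

/-- The coloring `c` contains a monochromatic triangle. -/
def HasMonoTriangle {V C : Type*} (c : V → V → C) : Prop :=
  ∃ u v w : V, u ≠ v ∧ u ≠ w ∧ v ≠ w ∧ c u v = c u w ∧ c u v = c v w

/-- The coloring `c` contains a monochromatic copy of the double star `S(n,m)`:
two adjacent centers `u, v`, a set `A` of `n` further leaves at `u` and a set `B`
of `m` further leaves at `v`, all edges in one color. -/
def HasMonoDoubleStar {V C : Type*} (c : V → V → C) (n m : ℕ) : Prop :=
  ∃ (u v : V) (A B : Finset V) (col : C),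
    u ≠ v ∧ A.card = n ∧ B.card = m ∧ Disjoint A B ∧
    u ∉ A ∧ u ∉ B ∧ v ∉ A ∧ v ∉ B ∧
    c u v = col ∧ (∀ a ∈ A, c u a = col) ∧ (∀ b ∈ B, c v b = col)

/-- Every `k`-edge-coloring of the complete graph on `N` vertices contains a
rainbow triangle or a monochromatic `S(n,m)` (so `gr_k(K_3 : S(n,m)) ≤ N`). -/
def grHolds (k n m N : ℕ) : Prop :=
  ∀ c : Fin N → Fin N → Fin k, IsSymmColoring c →
    HasRainbowTriangle c ∨ HasMonoDoubleStar c n m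

/-- There is a `k`-edge-coloring of the complete graph on `N` vertices with no
rainbow triangle and no monochromatic `S(n,m)` (so `gr_k(K_3 : S(n,m)) > N`). -/
def grAvoid (k n m N : ℕ) : Prop :=
  ∃ c : Fin N → Fin N → Fin k, IsSymmColoring c ∧
    ¬ HasRainbowTriangle c ∧ ¬ HasMonoDoubleStar c n m

section Gallai
variable {V C : Type*} [DecidableEq V]
set_option linter.unusedSectionVars false

/-- adjacency within `s` by an edge whose color satisfies `F`. -/
def GRel (c : V → V → C) (s : Finset V) (F : C → Prop) (u v : V) : Prop :=
  u ∈ s ∧ v ∈ s ∧ u ≠ v ∧ F (c u v)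

/-- reachability -/
def GWalk (c : V → V → C) (s : Finset V) (F : C → Prop) : V → V → Prop :=
  Relation.ReflTransGen (GRel c s F)

theorem GWalk.symm {c : V → V → C} (hsym : IsSymmColoring c) {s : Finset V} {F : C → Prop}
    {u v : V} (h : GWalk c s F u v) : GWalk c s F v u := by
  suffices hS : Std.Symm (GRel c s F) from Std.Symm.symm (r := Relation.ReflTransGen (GRel c s F)) _ _ h
  refine ⟨?_⟩
  rintro x y ⟨hx, hy, hxy, hF⟩
  exact ⟨hy, hx, hxy.symm, by rwa [hsym y x]⟩

theorem GWalk.trans' {c : V → V → C} {s : Finset V} {F : C → Prop} {u v w : V}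
    (h : GWalk c s F u v) (h' : GWalk c s F v w) : GWalk c s F u w :=
  Relation.ReflTransGen.trans h h'

/-- no-rainbow eliminator. -/
theorem rt_eq {c : V → V → C} (hnr : ¬ HasRainbowTriangle c) {y x x' : V}
    (h1 : y ≠ x) (h2 : y ≠ x') (h3 : x ≠ x')
    (h4 : c y x ≠ c x x') (h5 : c y x' ≠ c x x') : c y x = c y x' := by
  by_contra h
  exact hnr ⟨y, x, x', h1, h2, h3, h, h4, h5⟩

/-- no-rainbow eliminator, membership form. -/
theorem rt_mem {c : V → V → C} (hnr : ¬ HasRainbowTriangle c) {z x y : V}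
    (h1 : z ≠ x) (h2 : z ≠ y) (h3 : x ≠ y)
    (h4 : c z y ≠ c x y) : c z x = c z y ∨ c z x = c x y := by
  by_contra h
  push_neg at h
  exact hnr ⟨z, x, y, h1, h2, h3, h.1, h.2, h4⟩

theorem comp_mem {c : V → V → C} (hsym : IsSymmColoring c) {s : Finset V} {F : C → Prop}
    {a y x : V} (hy : ¬ GWalk c s F a y) (hx : GWalk c s F a x)
    (hxs : x ∈ s) (hys : y ∈ s) (hF : F (c y x)) : False := by
  have hxy : x ≠ y := by rintro rfl; exact hy hx
  exact hy (hx.trans' (Relation.ReflTransGen.single ⟨hxs, hys, hxy, by rwa [hsym x y]⟩))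

/-- vertices outside a component see the component monochromatically. -/
theorem comp_mono {c : V → V → C} (hsym : IsSymmColoring c) (hnr : ¬ HasRainbowTriangle c)
    {s : Finset V} {F : C → Prop} {a y : V} (hys : y ∈ s) (hy : ¬ GWalk c s F a y)
    {x : V} (hx : GWalk c s F a x) : c y x = c y a := by
  induction hx with
  | refl => rfl
  | @tail x' x hwalk hrel ih =>
    obtain ⟨hx's, hxs, hx'x, hF⟩ := hrel
    have hyx' : y ≠ x' := by rintro rfl; exact hy hwalk
    have hyx : y ≠ x := by
      rintro rfl
      exact hy (Relation.ReflTransGen.trans hwalk (Relation.ReflTransGen.single ⟨hx's, hxs, hx'x, hF⟩))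
    have hwx : GWalk c s F a x :=
      Relation.ReflTransGen.trans hwalk (Relation.ReflTransGen.single ⟨hx's, hxs, hx'x, hF⟩)
    have h4 : c y x' ≠ c x' x := by
      intro h
      exact comp_mem hsym hy hwalk hx's hys (show F (c y x') by rw [h]; exact hF)
    have h5 : c y x ≠ c x' x := by
      intro h
      exact comp_mem hsym hy hwx hxs hys (show F (c y x) by rw [h]; exact hF)
    exact (rt_eq hnr hyx' hyx hx'x h4 h5).symm.trans ih

/-- color `i` has an edge inside `s` -/
def HasEdge (c : V → V → C) (s : Finset V) (i : C) : Prop :=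
  ∃ u ∈ s, ∃ v ∈ s, u ≠ v ∧ c u v = i

/-- color `i` is spanning connected on `s` -/
def Conn (c : V → V → C) (s : Finset V) (i : C) : Prop :=
  ∀ u ∈ s, ∀ v ∈ s, GWalk c s (fun d => d = i) u v

theorem vertex_edge {c : V → V → C} {s : Finset V} {i : C}
    (hp : HasEdge c s i) (hc : Conn c s i) {z : V} (hz : z ∈ s) :
    ∃ t ∈ s, t ≠ z ∧ c z t = i := by
  obtain ⟨x, hx, y, hy, hxy, hcxy⟩ := hp
  rcases (hc z hz x hx).cases_head with h | ⟨w, hrel, _⟩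
  · subst h
    exact ⟨y, hy, fun h => hxy h.symm, hcxy⟩
  · obtain ⟨_, hw, hzw, hF⟩ := hrel
    exact ⟨w, hw, fun h => hzw h.symm, hF⟩

theorem walk_proj {c : V → V → C} (hsym : IsSymmColoring c) {s S : Finset V} {a : V}
    (haS : a ∈ S)
    (hmod : ∀ y ∈ s, y ∉ S → ∀ x ∈ S, c y x = c y a) {F : C → Prop} {u v : V}
    (h : GWalk c s F u v) :
    GWalk c ((s \ S) ∪ {a}) F (if u ∈ S then a else u) (if v ∈ S then a else v) := by
  induction h with
  | refl => exact Relation.ReflTransGen.refl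
  | @tail x y hw hrel ih =>
    obtain ⟨hxs, hys, hxy, hF⟩ := hrel
    by_cases hxS : x ∈ S <;> by_cases hyS : y ∈ S <;> simp only [hxS, hyS, if_pos, if_neg,
      if_true, if_false] at ih ⊢
    · exact ih
    · refine ih.tail ⟨?_, ?_, ?_, ?_⟩
      · exact mem_union_right _ (mem_singleton_self a)
      · exact mem_union_left _ (mem_sdiff.mpr ⟨hys, hyS⟩)
      · rintro rfl; exact hyS haS
      · have h1 : c y x = c y a := hmod y hys hyS x hxS
        have : c a y = c x y := by rw [hsym a y, ← h1, hsym y x]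
        rwa [this]
    · refine ih.tail ⟨?_, ?_, ?_, ?_⟩
      · exact mem_union_left _ (mem_sdiff.mpr ⟨hxs, hxS⟩)
      · exact mem_union_right _ (mem_singleton_self a)
      · rintro rfl; exact hxS haS
      · have h1 : c x y = c x a := hmod x hxs hxS y hyS
        rwa [← h1]
    · exact ih.tail ⟨mem_union_left _ (mem_sdiff.mpr ⟨hxs, hxS⟩),
        mem_union_left _ (mem_sdiff.mpr ⟨hys, hyS⟩), hxy, hF⟩

/-- the notion of a nontrivial module of `s`. -/
def HasModule (c : V → V → C) (s : Finset V) : Prop :=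
  ∃ S : Finset V, S ⊆ s ∧ 2 ≤ S.card ∧ S.card < s.card ∧
    ∃ a ∈ S, ∀ y ∈ s, y ∉ S → ∀ x ∈ S, c y x = c y a

theorem spanning_of_noModule {c : V → V → C} (hsym : IsSymmColoring c)
    (hnr : ¬ HasRainbowTriangle c) {s : Finset V} (hnm : ¬ HasModule c s)
    {F : C → Prop} {a a' : V} (ha : a ∈ s) (ha' : a' ∈ s) (haa' : a ≠ a') (hF : F (c a a')) :
    ∀ u ∈ s, ∀ v ∈ s, GWalk c s F u v := by
  classical
  have hall : ∀ x ∈ s, GWalk c s F a x := by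
    by_contra hno
    push_neg at hno
    obtain ⟨y, hys, hy⟩ := hno
    set R := s.filter (fun x => GWalk c s F a x) with hR
    refine hnm ⟨R, filter_subset _ _, ?_, ?_, a, ?_, ?_⟩
    · have haR : a ∈ R := mem_filter.mpr ⟨ha, Relation.ReflTransGen.refl⟩
      have ha'R : a' ∈ R := mem_filter.mpr ⟨ha',
        Relation.ReflTransGen.single ⟨ha, ha', haa', hF⟩⟩
      exact one_lt_card_iff.mpr ⟨a, a', haR, ha'R, haa'⟩
    · refine card_lt_card ⟨filter_subset _ _, fun hsub => ?_⟩
      have := mem_filter.mp (hsub hys)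
      exact hy this.2
    · exact mem_filter.mpr ⟨ha, Relation.ReflTransGen.refl⟩
    · intro y' hy's hy'R x hxR
      exact comp_mono hsym hnr hy's (fun hw => hy'R (mem_filter.mpr ⟨hy's, hw⟩))
        (mem_filter.mp hxR).2
  intro u hu v hv
  exact ((hall u hu).symm hsym).trans' (hall v hv)

theorem finalstep {c : V → V → C} (hsym : IsSymmColoring c) (hnr : ¬ HasRainbowTriangle c)
    {s : Finset V} {z a : V} {S : Finset V} {g ρ σ : C}
    (hgρ : g ≠ ρ) (hgσ : g ≠ σ) (hρσ : ρ ≠ σ)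
    (hzs : z ∈ s) (hSsub : S ⊆ s.erase z) (haS : a ∈ S)
    (hφ : ∀ y ∈ s.erase z, y ∉ S → c y a = ρ ∨ c y a = σ)
    (hmono : ∀ y ∈ s.erase z, y ∉ S → ∀ x ∈ S, c y x = c y a)
    (hzS : ∀ x ∈ S, c z x = g ∨ c z x = ρ)
    (hY1 : ∀ y ∈ s.erase z, y ∉ S → c z y ≠ c y a → c y a = ρ ∧ c z y = g)
    (hσe : ∃ t ∈ s, t ≠ z ∧ c z t = σ)
    (hga : ∀ w ∈ s, GWalk c s (fun d => d = g) w a) : False := by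
  -- the set of vertices seeing both `z` and the module in color σ
  set P : V → Prop := fun w => w ∈ s.erase z ∧ w ∉ S ∧ c z w = c w a ∧ c w a = σ with hP
  have has : a ∈ s := (mem_erase.mp (hSsub haS)).2
  -- z's σ-neighbor is in P
  obtain ⟨t, hts, htz, hct⟩ := hσe
  have htE : t ∈ s.erase z := mem_erase.mpr ⟨htz, hts⟩
  have htS : t ∉ S := by
    intro htS
    rcases hzS t htS with h | h
    · rw [h] at hct; exact hgσ hct
    · rw [h] at hct; exact hρσ hct
  have hzt1 : c z t = c t a := by
    by_contra hne
    have := (hY1 t htE htS hne).2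
    rw [this] at hct; exact hgσ hct
  have htP : P t := by
    refine ⟨htE, htS, hzt1, ?_⟩
    rcases hφ t htE htS with h | h
    · rw [hzt1, h] at hct; exact absurd hct hρσ
    · exact h
  -- P is closed under g-edges
  have hclosed : ∀ w, P w → ∀ t' ∈ s, t' ≠ w → c w t' = g → P t' := by
    rintro w ⟨hwE, hwS, hzw, hwa⟩ t' ht's ht'w hcg
    have hwa' : w ≠ a := fun h => hwS (h ▸ haS)
    by_cases ht'z : t' = z
    · subst ht'z
      rw [hsym w t', hzw, hwa] at hcg
      exact absurd hcg.symm hgσ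
    have ht'E : t' ∈ s.erase z := mem_erase.mpr ⟨ht'z, ht's⟩
    by_cases ht'S : t' ∈ S
    · have := hmono w hwE hwS t' ht'S
      rw [this, hwa] at hcg
      exact absurd hcg.symm hgσ
    · -- t' outside S; show c t' a = σ and c z t' = c t' a
      have ht'a : c t' a ≠ ρ := by
        intro hρ
        -- rainbow triangle (w, t', a)
        refine hnr ⟨w, t', a, ht'w.symm, hwa', fun h => ht'S (h ▸ haS), ?_, ?_, ?_⟩
        · rw [hcg, hwa]; exact hgσ
        · rw [hcg, hρ]; exact hgρ
        · rw [hwa, hρ]; exact hρσ.symm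

      have ht'aσ : c t' a = σ := by
        rcases hφ t' ht'E ht'S with h | h
        · exact absurd h ht'a
        · exact h
      have hzt' : c z t' = c t' a := by
        by_contra hne
        exact ht'a (hY1 t' ht'E ht'S hne).1
      exact ⟨ht'E, ht'S, hzt', ht'aσ⟩
  -- every vertex g-reachable from t satisfies P
  have hreach : ∀ x, GWalk c s (fun d => d = g) t x → P x := by
    intro x hx
    induction hx with
    | refl => exact htP
    | @tail u x' hw hrel ih =>
      obtain ⟨hus, hx's, hux', hF⟩ := hrel
      exact hclosed u ih x' hx's (Ne.symm hux') hF
  have := hreach a (hga t hts |>.trans' (Relation.ReflTransGen.refl) |>.symm hsym |>.symm hsym)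
  exact this.2.1 haS |>.elim

theorem gstep {c : V → V → C} (hsym : IsSymmColoring c) (hnr : ¬ HasRainbowTriangle c)
    {s : Finset V} {r b g : C}
    (hrb : r ≠ b) (hrg : r ≠ g) (hbg : b ≠ g)
    (hcol : ∀ u ∈ s, ∀ v ∈ s, u ≠ v → c u v = r ∨ c u v = b ∨ c u v = g)
    {z : V} (hzs : z ∈ s)
    (hpresr : HasEdge c s r) (hpresb : HasEdge c s b) (hpresg : HasEdge c s g)
    (hconnr : Conn c s r) (hconnb : Conn c s b) (hconng : Conn c s g)
    (hpr' : HasEdge c (s.erase z) g)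
    (hdisc : ∃ u ∈ s.erase z, ∃ v ∈ s.erase z, ¬ GWalk c (s.erase z) (fun d => d = g) u v)
    (hIH : ∀ s'' : Finset V, s''.card < s.card → ∀ r' b' g' : C, r' ≠ b' → r' ≠ g' → b' ≠ g' →
      (∀ u ∈ s'', ∀ v ∈ s'', u ≠ v → c u v = r' ∨ c u v = b' ∨ c u v = g') →
      HasEdge c s'' r' → HasEdge c s'' b' → HasEdge c s'' g' →
      Conn c s'' r' → Conn c s'' b' → Conn c s'' g' → False) : False := by
  classical
  set s' := s.erase z with hs'
  have hs'sub : s' ⊆ s := erase_subset _ _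
  obtain ⟨a, ha, a', ha', haa', hgaa⟩ := hpr'
  set S := s'.filter (fun x => GWalk c s' (fun d => d = g) a x) with hS
  have hSsub : S ⊆ s' := filter_subset _ _
  have haS : a ∈ S := mem_filter.mpr ⟨ha, Relation.ReflTransGen.refl⟩
  have ha'S : a' ∈ S := mem_filter.mpr ⟨ha', Relation.ReflTransGen.single ⟨ha, ha', haa', hgaa⟩⟩
  have hzS : z ∉ S := fun h => (mem_erase.mp (hSsub h)).1 rfl
  have has : a ∈ s := hs'sub ha
  have hzna : z ≠ a := fun h => hzS (h ▸ haS)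
  -- a vertex outside S
  obtain ⟨u0, hu0, v0, hv0, hnw⟩ := hdisc
  have hw0 : ∃ w0 ∈ s', w0 ∉ S := by
    by_cases h : u0 ∈ S
    · refine ⟨v0, hv0, fun hv0S => hnw ?_⟩
      exact ((mem_filter.mp h).2.symm hsym).trans' (mem_filter.mp hv0S).2
    · exact ⟨u0, hu0, h⟩
  obtain ⟨w0, hw0s, hw0S⟩ := hw0
  have hw0z : w0 ≠ z := (mem_erase.mp hw0s).1
  have hw0a : w0 ≠ a := fun h => hw0S (h ▸ haS)
  -- mono view of outside vertices
  have hmonoS : ∀ y ∈ s', y ∉ S → ∀ x ∈ S, c y x = c y a := by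
    intro y hys hyS x hxS
    exact comp_mono hsym hnr hys (fun hw => hyS (mem_filter.mpr ⟨hys, hw⟩))
      (mem_filter.mp hxS).2
  have hnotg : ∀ y ∈ s', y ∉ S → ∀ x ∈ S, c y x ≠ g := by
    intro y hys hyS x hxS h
    exact comp_mem hsym (fun hw => hyS (mem_filter.mpr ⟨hys, hw⟩)) (mem_filter.mp hxS).2
      (mem_filter.mp hxS).1 hys h
  -- membership of erased vertices
  have hmem' : ∀ y ∈ s, y ≠ z → y ∈ s' := fun y hy hyz => mem_erase.mpr ⟨hyz, hy⟩
  have hScard : 2 ≤ S.card := one_lt_card_iff.mpr ⟨a, a', haS, ha'S, haa'⟩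
  -- generic contraction machinery
  have hcontract : ∀ T : Finset V, T ⊆ s → a ∈ T →
      (∀ y ∈ s, y ∉ T → ∀ x ∈ T, c y x = c y a) → 2 ≤ T.card →
      HasEdge c ((s \ T) ∪ {a}) r → HasEdge c ((s \ T) ∪ {a}) b →
      HasEdge c ((s \ T) ∪ {a}) g → False := by
    intro T hTsub haT hmodT hTcard hper hpeb hpeg
    set s2 := (s \ T) ∪ {a} with hs2
    have hs2sub : s2 ⊆ s := by
      intro x hx
      rcases mem_union.mp hx with h | h
      · exact (mem_sdiff.mp h).1
      · exact (mem_singleton.mp h) ▸ has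
    have hid : ∀ u ∈ s2, (if u ∈ T then a else u) = u := by
      intro u hu
      rcases mem_union.mp hu with h | h
      · exact if_neg (mem_sdiff.mp h).2
      · rw [mem_singleton.mp h]; exact ite_self a
    have hcard2 : s2.card < s.card := by
      have h1 : s2.card ≤ (s \ T).card + 1 := by
        apply le_trans (card_union_le _ _); simp
      have h2 : (s \ T).card = s.card - T.card := card_sdiff_of_subset hTsub
      have h3 : T.card ≤ s.card := card_le_card hTsub
      omega
    have hconn2 : ∀ i : C, Conn c s i → Conn c s2 i := by
      intro i hci u hu v hv
      have := walk_proj hsym haT hmodT (hci u (hs2sub hu) v (hs2sub hv))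
      rwa [hid u hu, hid v hv] at this
    exact hIH s2 hcard2 r b g hrb hrg hbg
      (fun u hu v hv huv => hcol u (hs2sub hu) v (hs2sub hv) huv)
      hper hpeb hpeg (hconn2 r hconnr) (hconn2 b hconnb) (hconn2 g hconng)
  -- edges for the contracted set, for colors found at w0 (w0 ∉ T always)
  have hedge_out : ∀ T : Finset V, a ∈ T → (∀ y ∈ s, y ∉ T → ∀ x ∈ T, c y x = c y a) →
      ∀ i : C, w0 ∉ T → HasEdge c s i → Conn c s i →
      (c w0 a = i → False) → HasEdge c ((s \ T) ∪ {a}) i := by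
    intro T haT hmodT i hw0T hpi hci hnoti
    obtain ⟨t, hts, htw0, hct⟩ := vertex_edge hpi hci (hs'sub hw0s)
    by_cases htT : t ∈ T
    · exfalso
      apply hnoti
      rw [← hmodT w0 (hs'sub hw0s) hw0T t htT]
      exact hct
    · exact ⟨w0, mem_union_left _ (mem_sdiff.mpr ⟨hs'sub hw0s, hw0T⟩),
        t, mem_union_left _ (mem_sdiff.mpr ⟨hts, htT⟩), fun h => htw0 h.symm, hct⟩
  have hedge_in : ∀ T : Finset V, a ∈ T → (∀ y ∈ s, y ∉ T → ∀ x ∈ T, c y x = c y a) →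
      ∀ i : C, w0 ∉ T → HasEdge c s i → Conn c s i →
      c w0 a = i → HasEdge c ((s \ T) ∪ {a}) i := by
    intro T haT hmodT i hw0T _ _ hca
    exact ⟨w0, mem_union_left _ (mem_sdiff.mpr ⟨hs'sub hw0s, hw0T⟩),
      a, mem_union_right _ (mem_singleton_self a), hw0a, hca⟩
  have hedge_any : ∀ T : Finset V, a ∈ T → (∀ y ∈ s, y ∉ T → ∀ x ∈ T, c y x = c y a) →
      ∀ i : C, w0 ∉ T → HasEdge c s i → Conn c s i →
      HasEdge c ((s \ T) ∪ {a}) i := by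
    intro T haT hmodT i hw0T hpi hci
    by_cases h : c w0 a = i
    · exact hedge_in T haT hmodT i hw0T hpi hci h
    · exact hedge_out T haT hmodT i hw0T hpi hci (fun hh => h hh)
  by_cases hmix : ∀ x ∈ S, c z x = c z a
  · -- z is monochromatic on S : contract S
    have hmodS : ∀ y ∈ s, y ∉ S → ∀ x ∈ S, c y x = c y a := by
      intro y hys hyS x hxS
      by_cases hyz : y = z
      · subst hyz; rw [hmix x hxS, hmix a haS]
      · exact hmonoS y (hmem' y hys hyz) hyS x hxS
    -- g edge : via z
    have hzg : HasEdge c ((s \ S) ∪ {a}) g := by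
      obtain ⟨t, hts, htz, hct⟩ := vertex_edge hpresg hconng hzs
      have hzmem : z ∈ (s \ S) ∪ {a} := mem_union_left _ (mem_sdiff.mpr ⟨hzs, hzS⟩)
      by_cases htS : t ∈ S
      · refine ⟨z, hzmem, a, mem_union_right _ (mem_singleton_self a), hzna, ?_⟩
        rw [← hmix t htS]
        exact hct
      · exact ⟨z, hzmem, t, mem_union_left _ (mem_sdiff.mpr ⟨hts, htS⟩),
          fun h => htz h.symm, hct⟩
    exact hcontract S (hSsub.trans hs'sub) haS hmodS hScard
      (hedge_any S haS hmodS r hw0S hpresr hconnr)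
      (hedge_any S haS hmodS b hw0S hpresb hconnb) hzg
  · push_neg at hmix
    obtain ⟨x₁, hx₁S, hx₁⟩ := hmix
    by_cases hY1e : ∀ y ∈ s', y ∉ S → c z y = c y a
    · -- contract T = insert z S
      set T := insert z S with hT
      have haT : a ∈ T := mem_insert_of_mem haS
      have hw0T : w0 ∉ T := by
        intro h
        rcases mem_insert.mp h with h | h
        · exact hw0z h
        · exact hw0S h
      have hmodT : ∀ y ∈ s, y ∉ T → ∀ x ∈ T, c y x = c y a := by
        intro y hys hyT x hxT
        have hyz : y ≠ z := fun h => hyT (h ▸ mem_insert_self z S)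
        have hyS : y ∉ S := fun h => hyT (mem_insert_of_mem h)
        have hys' : y ∈ s' := hmem' y hys hyz
        rcases mem_insert.mp hxT with h | h
        · subst h; rw [hsym y x, hY1e y hys' hyS]
        · exact hmonoS y hys' hyS x h
      have hTsub : T ⊆ s := by
        intro x hx
        rcases mem_insert.mp hx with h | h
        · exact h ▸ hzs
        · exact hs'sub (hSsub h)
      have hTcard : 2 ≤ T.card := le_trans hScard (card_le_card (subset_insert _ _))
      -- g edge inside the complement of T, based at w0
      have hgT : HasEdge c ((s \ T) ∪ {a}) g := by
        apply hedge_out T haT hmodT g hw0T hpresg hconng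
        intro h
        exact hnotg w0 hw0s hw0S a haS h
      exact hcontract T hTsub haT hmodT hTcard
        (hedge_any T haT hmodT r hw0T hpresr hconnr)
        (hedge_any T haT hmodT b hw0T hpresb hconnb) hgT
    · push_neg at hY1e
      obtain ⟨y1, hy1s, hy1S, hy1ne⟩ := hY1e
      have hy1z : y1 ≠ z := (mem_erase.mp hy1s).1
      -- z's colors on S lie in {c z t, c t a} for any outside t with differing view
      have hzmemT : ∀ t ∈ s', t ∉ S → c z t ≠ c t a →
          ∀ x ∈ S, c z x = c z t ∨ c z x = c t a := by
        intro t hts htS htne x hxS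
        have hxs' : x ∈ s' := hSsub hxS
        have hzx : z ≠ x := fun h => hzS (h ▸ hxS)
        have hzt : z ≠ t := fun h => (mem_erase.mp hts).1 h.symm
        have hxt : x ≠ t := fun h => htS (h ▸ hxS)
        have hcxt : c x t = c t a := by rw [hsym x t]; exact hmonoS t hts htS x hxS
        have h4 : c z t ≠ c x t := by rw [hcxt]; exact htne
        rcases rt_mem hnr hzx hzt hxt h4 with h | h
        · exact Or.inl h
        · exact Or.inr (by rw [h, hcxt])
      -- juggling: for t in Y1, c z t and c t a agree with the two values on S
      have hjuggle : ∀ t ∈ s', t ∉ S → c z t ≠ c t a →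
          (c z t = c z x₁ ∨ c z t = c z a) ∧ (c t a = c z x₁ ∨ c t a = c z a) := by
        intro t hts htS htne
        rcases hzmemT t hts htS htne x₁ hx₁S with h1 | h1 <;>
          rcases hzmemT t hts htS htne a haS with h2 | h2
        · exact absurd (h1.symm ▸ h2.symm ▸ rfl : c z x₁ = c z a) hx₁
        · exact ⟨Or.inl h1.symm, Or.inr h2.symm⟩
        · exact ⟨Or.inr h2.symm, Or.inl h1.symm⟩
        · exact absurd (h1.symm ▸ h2.symm ▸ rfl : c z x₁ = c z a) hx₁
      -- the two values on S
      have hval : ∀ x ∈ S, c z x = c z y1 ∨ c z x = c y1 a := hzmemT y1 hy1s hy1S hy1ne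
      by_cases hβg : c z y1 = g
      · -- subcase II : the pair is {g, c y1 a}
        have hφ1g : c y1 a ≠ g := hnotg y1 hy1s hy1S a haS
        -- identify the g/φ1 values of c z x₁ and c z a
        have hx₁mem := hval x₁ hx₁S
        have hamem := hval a haS
        rw [hβg] at hx₁mem hamem
        -- facts needed by finalstep
        have hzSf : ∀ x ∈ S, c z x = g ∨ c z x = c y1 a := by
          intro x hxS; rcases hval x hxS with h | h
          · exact Or.inl (h.trans hβg)
          · exact Or.inr h
        have hY1f : ∀ y ∈ s', y ∉ S → c z y ≠ c y a → c y a = c y1 a ∧ c z y = g := by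
          intro y hys hyS hyne
          obtain ⟨hj1, hj2⟩ := hjuggle y hys hyS hyne
          have hyag : c y a ≠ g := hnotg y hys hyS a haS
          -- c z x₁ and c z a take the two distinct values among {g, φ1}
          rcases hx₁mem with hx₁v | hx₁v <;> rcases hamem with hav | hav
          · exact absurd (hx₁v.trans hav.symm) hx₁
          · -- c z x₁ = g, c z a = φ1
            constructor
            · rcases hj2 with h | h
              · rw [h, hx₁v] at hyag; exact absurd rfl hyag
              · rw [h, hav]
            · rcases hj1 with h | h
              · rw [h, hx₁v]
              · rw [h, hav]
                rcases hj2 with h2 | h2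
                · rw [h2, hx₁v] at hyag; exact absurd rfl hyag
                · rw [h2, hav] at hyne; rw [h, hav] at hyne; exact absurd rfl hyne
          · -- c z x₁ = φ1, c z a = g
            constructor
            · rcases hj2 with h | h
              · rw [h, hx₁v]
              · rw [h, hav] at hyag; exact absurd rfl hyag
            · rcases hj1 with h | h
              · rw [h, hx₁v]
                rcases hj2 with h2 | h2
                · rw [h2, hx₁v] at hyne; rw [h, hx₁v] at hyne; exact absurd rfl hyne
                · rw [h2, hav] at hyag; exact absurd rfl hyag
              · rw [h, hav]
          · exact absurd (hx₁v.trans hav.symm) hx₁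
        -- φ1 is r or b ; σ is the other
        have hy1a : c y1 a = r ∨ c y1 a = b ∨ c y1 a = g :=
          hcol y1 (hs'sub hy1s) a has (fun h => hy1S (h ▸ haS))
        have hga' : ∀ w ∈ s, GWalk c s (fun d => d = g) w a := fun w hw => hconng w hw a has
        have hφcol : ∀ y ∈ s', y ∉ S → c y a = r ∨ c y a = b := by
          intro y hys hyS
          rcases hcol y (hs'sub hys) a has (fun h => hyS (h ▸ haS)) with h | h | h
          · exact Or.inl h
          · exact Or.inr h
          · exact absurd h (hnotg y hys hyS a haS)
        rcases hy1a with hρ | hρ | hρ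
        · -- ρ = r, σ = b
          have hσe : ∃ t ∈ s, t ≠ z ∧ c z t = b := by
            obtain ⟨t, hts, htz, hct⟩ := vertex_edge hpresb hconnb hzs
            exact ⟨t, hts, htz, hct⟩
          refine finalstep hsym hnr (g := g) (ρ := r) (σ := b)
            (Ne.symm hrg) (Ne.symm hbg) hrb hzs hSsub haS
            (fun y hys hyS => hφcol y hys hyS) hmonoS
            (fun x hxS => hρ ▸ hzSf x hxS)
            (fun y hys hyS hyne => hρ ▸ hY1f y hys hyS hyne) hσe hga'
        · -- ρ = b, σ = r
          have hσe : ∃ t ∈ s, t ≠ z ∧ c z t = r := by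
            obtain ⟨t, hts, htz, hct⟩ := vertex_edge hpresr hconnr hzs
            exact ⟨t, hts, htz, hct⟩
          refine finalstep hsym hnr (g := g) (ρ := b) (σ := r)
            (Ne.symm hbg) (Ne.symm hrg) (Ne.symm hrb) hzs hSsub haS
            (fun y hys hyS => (hφcol y hys hyS).symm) hmonoS
            (fun x hxS => hρ ▸ hzSf x hxS)
            (fun y hys hyS hyne => hρ ▸ hY1f y hys hyS hyne) hσe hga'
        · exact absurd hρ hφ1g
      · -- subcase I : g is not among z's colors, contradiction with z's g-edge
        have hnog : ∀ t ∈ s', c z t ≠ g := by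
          intro t hts
          by_cases htS : t ∈ S
          · rcases hval t htS with h | h
            · rw [h]; exact hβg
            · rw [h]; exact hnotg y1 hy1s hy1S a haS
          · by_cases htne : c z t = c t a
            · rw [htne]; exact hnotg t hts htS a haS
            · obtain ⟨hj1, _⟩ := hjuggle t hts htS htne
              rcases hj1 with h | h
              · rw [h]
                rcases hval x₁ hx₁S with h1 | h1
                · rw [h1]; exact hβg
                · rw [h1]; exact hnotg y1 hy1s hy1S a haS
              · rw [h]
                rcases hval a haS with h1 | h1
                · rw [h1]; exact hβg
                · rw [h1]; exact hnotg y1 hy1s hy1S a haS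
        obtain ⟨t, hts, htz, hct⟩ := vertex_edge hpresg hconng hzs
        exact hnog t (hmem' t hts htz) hct

theorem noBad : ∀ n : ℕ, ∀ s : Finset V, ∀ c : V → V → C, IsSymmColoring c →
    ¬ HasRainbowTriangle c → ∀ r b g : C, r ≠ b → r ≠ g → b ≠ g →
    (∀ u ∈ s, ∀ v ∈ s, u ≠ v → c u v = r ∨ c u v = b ∨ c u v = g) →
    HasEdge c s r → HasEdge c s b → HasEdge c s g →
    Conn c s r → Conn c s b → Conn c s g → s.card ≤ n → False := by
  intro n
  induction n with
  | zero =>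
    intro s c _ _ r b g _ _ _ _ hpr _ _ _ _ _ hcard
    obtain ⟨u, hu, -⟩ := hpr
    rw [Nat.le_zero, card_eq_zero] at hcard
    exact absurd hu (hcard ▸ notMem_empty u)
  | succ n ih =>
    intro s c hsym hnr r b g hrb hrg hbg hcol hpr hpb hpg hcr hcb hcg hcard
    have hpr2 := hpr
    obtain ⟨z, hzs, -⟩ := hpr2
    set s' := s.erase z with hs'
    have hcard' : s'.card ≤ n := by
      have h1 : s'.card = s.card - 1 := by rw [hs']; exact card_erase_of_mem hzs
      have hpos : 1 ≤ s.card := card_pos.mpr ⟨z, hzs⟩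
      omega
    have hs'sub : s' ⊆ s := erase_subset _ _
    -- presence of each color on s'
    have hpres' : ∀ i j : C, i ≠ j → HasEdge c s i → Conn c s i →
        HasEdge c s j → Conn c s j → HasEdge c s' i := by
      intro i j hij hpi hci hpj hcj
      by_contra hno
      have hall : ∀ x ∈ s', c x z = i := by
        intro x hx
        obtain ⟨t, hts, htx, hct⟩ := vertex_edge hpi hci (hs'sub hx)
        by_cases htz : t = z
        · exact htz ▸ hct
        · exact absurd ⟨x, hx, t, mem_erase.mpr ⟨htz, hts⟩, fun h => htx h.symm, hct⟩ hno
      obtain ⟨t, hts, htz, hct⟩ := vertex_edge hpj hcj hzs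
      have : c t z = i := hall t (mem_erase.mpr ⟨htz, hts⟩)
      rw [hsym t z, hct] at this
      exact hij this.symm
    have hpr' := hpres' r b hrb hpr hcr hpb hcb
    have hpb' := hpres' b r hrb.symm hpb hcb hpr hcr
    have hpg' := hpres' g r hrg.symm hpg hcg hpr hcr
    -- IH for contraction
    have hIH : ∀ s'' : Finset V, s''.card < s.card → ∀ r' b' g' : C, r' ≠ b' → r' ≠ g' →
        b' ≠ g' → (∀ u ∈ s'', ∀ v ∈ s'', u ≠ v → c u v = r' ∨ c u v = b' ∨ c u v = g') →
        HasEdge c s'' r' → HasEdge c s'' b' → HasEdge c s'' g' →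
        Conn c s'' r' → Conn c s'' b' → Conn c s'' g' → False := by
      intro s'' hlt r' b' g' h1 h2 h3 h4 h5 h6 h7 h8 h9 h10
      exact ih s'' c hsym hnr r' b' g' h1 h2 h3 h4 h5 h6 h7 h8 h9 h10 (by omega)
    by_cases hcr' : Conn c s' r
    · by_cases hcb' : Conn c s' b
      · by_cases hcg' : Conn c s' g
        · exact ih s' c hsym hnr r b g hrb hrg hbg
            (fun u hu v hv huv => hcol u (hs'sub hu) v (hs'sub hv) huv)
            hpr' hpb' hpg' hcr' hcb' hcg' hcard'
        · -- g disconnected on s'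
          have hdisc : ∃ u ∈ s', ∃ v ∈ s', ¬ GWalk c s' (fun d => d = g) u v := by
            unfold Conn at hcg'
            push_neg at hcg'
            obtain ⟨u, hu, v, hv, h⟩ := hcg'
            exact ⟨u, hu, v, hv, h⟩
          exact gstep hsym hnr hrb hrg hbg hcol hzs hpr hpb hpg hcr hcb hcg hpg' hdisc hIH
      · -- b disconnected on s'
        have hdisc : ∃ u ∈ s', ∃ v ∈ s', ¬ GWalk c s' (fun d => d = b) u v := by
          unfold Conn at hcb'
          push_neg at hcb'
          obtain ⟨u, hu, v, hv, h⟩ := hcb'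
          exact ⟨u, hu, v, hv, h⟩
        refine gstep hsym hnr (r := r) (b := g) (g := b) hrg hrb hbg.symm
          (fun u hu v hv huv => by rcases hcol u hu v hv huv with h | h | h <;> tauto)
          hzs hpr hpg hpb hcr hcg hcb hpb' hdisc ?_
        intro s2 hlt r' b' g' h1 h2 h3 h4 h5 h6 h7 h8 h9 h10
        exact hIH s2 hlt r' b' g' h1 h2 h3 h4 h5 h6 h7 h8 h9 h10
    · -- r disconnected on s'
      have hdisc : ∃ u ∈ s', ∃ v ∈ s', ¬ GWalk c s' (fun d => d = r) u v := by
        unfold Conn at hcr'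
        push_neg at hcr'
        obtain ⟨u, hu, v, hv, h⟩ := hcr'
        exact ⟨u, hu, v, hv, h⟩
      refine gstep hsym hnr (r := b) (b := g) (g := r) hbg hrb.symm hrg.symm
        (fun u hu v hv huv => by rcases hcol u hu v hv huv with h | h | h <;> tauto)
        hzs hpb hpg hpr hcb hcg hcr hpr' hdisc ?_
      intro s2 hlt r' b' g' h1 h2 h3 h4 h5 h6 h7 h8 h9 h10
      exact hIH s2 hlt r' b' g' h1 h2 h3 h4 h5 h6 h7 h8 h9 h10

/-- rebuild a partition after contracting a module -/
theorem expand_partition {c : V → V → C} (hsym : IsSymmColoring c)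
    {s S : Finset V} {a : V} (hSsub : S ⊆ s) (haS : a ∈ S)
    (hmono : ∀ y ∈ s, y ∉ S → ∀ x ∈ S, c y x = c y a)
    (Pp : Finpartition ((s \ S) ∪ {a})) :
    ∃ Q : Finpartition s, Q.parts.card = Pp.parts.card ∧
      (∀ c1 c2 : C, (∀ p ∈ Pp.parts, ∀ q ∈ Pp.parts, p ≠ q →
        ∃ col : C, (col = c1 ∨ col = c2) ∧ ∀ u ∈ p, ∀ v ∈ q, c u v = col) →
        (∀ p ∈ Q.parts, ∀ q ∈ Q.parts, p ≠ q →
        ∃ col : C, (col = c1 ∨ col = c2) ∧ ∀ u ∈ p, ∀ v ∈ q, c u v = col)) := by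
  classical
  have hs2 : ((s \ S) ∪ {a} : Finset V) = (s \ S) ∪ {a} := rfl
  have has : a ∈ s := hSsub haS
  have hs2sub : ((s \ S) ∪ {a} : Finset V) ⊆ s := by
    intro x hx
    rcases mem_union.mp hx with h | h
    · exact (mem_sdiff.mp h).1
    · exact (mem_singleton.mp h) ▸ has
  have hs2S : ∀ x ∈ (s \ S) ∪ {a}, x ∈ S → x = a := by
    intro x hx hxS
    rcases mem_union.mp hx with h | h
    · exact absurd hxS (mem_sdiff.mp h).2
    · exact mem_singleton.mp h
  set f : Finset V → Finset V := fun q => if a ∈ q then q ∪ S else q with hf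
  have hfsup : ∀ q, q ⊆ f q := by
    intro q x hx
    by_cases h : a ∈ q <;> simp [hf, h, hx]
  have hdisj : ∀ q1 ∈ Pp.parts, ∀ q2 ∈ Pp.parts, q1 ≠ q2 → Disjoint q1 q2 := by
    intro q1 h1 q2 h2 h12
    exact Pp.supIndep.pairwiseDisjoint h1 h2 h12
  have honea : ∀ q1 ∈ Pp.parts, ∀ q2 ∈ Pp.parts, a ∈ q1 → a ∈ q2 → q1 = q2 := by
    intro q1 h1 q2 h2 ha1 ha2
    by_contra h12
    exact (disjoint_left.mp (hdisj q1 h1 q2 h2 h12)) ha1 ha2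
  have hfdiso : ∀ q1 ∈ Pp.parts, ∀ q2 ∈ Pp.parts, q1 ≠ q2 → Disjoint (f q1) (f q2) := by
    intro q1 h1 q2 h2 h12
    rw [disjoint_left]
    intro x hx1 hx2
    have hq1s : q1 ⊆ (s \ S) ∪ {a} := Pp.le h1
    have hq2s : q2 ⊆ (s \ S) ∪ {a} := Pp.le h2
    by_cases ha1 : a ∈ q1 <;> by_cases ha2 : a ∈ q2
    · exact h12 (honea q1 h1 q2 h2 ha1 ha2)
    · simp only [hf, if_pos ha1, if_neg ha2] at hx1 hx2
      rcases mem_union.mp hx1 with h | h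
      · exact (disjoint_left.mp (hdisj q1 h1 q2 h2 h12)) h hx2
      · exact ha2 ((hs2S x (hq2s hx2) h) ▸ hx2)
    · simp only [hf, if_neg ha1, if_pos ha2] at hx1 hx2
      rcases mem_union.mp hx2 with h | h
      · exact (disjoint_left.mp (hdisj q1 h1 q2 h2 h12)) hx1 h
      · exact ha1 ((hs2S x (hq1s hx1) h) ▸ hx1)
    · simp only [hf, if_neg ha1, if_neg ha2] at hx1 hx2
      exact (disjoint_left.mp (hdisj q1 h1 q2 h2 h12)) hx1 hx2
  have hinj : ∀ q1 ∈ Pp.parts, ∀ q2 ∈ Pp.parts, f q1 = f q2 → q1 = q2 := by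
    intro q1 h1 q2 h2 hfe
    by_contra h12
    obtain ⟨x, hx⟩ := Pp.nonempty_of_mem_parts h1
    have hx1 : x ∈ f q1 := hfsup q1 hx
    exact (disjoint_left.mp (hfdiso q1 h1 q2 h2 h12)) hx1 (hfe ▸ hx1)
  have hfs : ∀ q ∈ Pp.parts, f q ⊆ s := by
    intro q hq x hx
    by_cases h : a ∈ q
    · simp only [hf, if_pos h] at hx
      rcases mem_union.mp hx with h' | h'
      · exact hs2sub (Pp.le hq h')
      · exact hSsub h'
    · simp only [hf, if_neg h] at hx
      exact hs2sub (Pp.le hq hx)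
  refine ⟨⟨Pp.parts.image f, ?_, ?_, ?_⟩, ?_, ?_⟩
  · -- supIndep
    apply Finset.supIndep_iff_pairwiseDisjoint.mpr
    intro p1 h1 p2 h2 h12
    obtain ⟨q1, hq1, rfl⟩ := mem_image.mp h1
    obtain ⟨q2, hq2, rfl⟩ := mem_image.mp h2
    have : q1 ≠ q2 := fun h => h12 (by rw [h])
    exact hfdiso q1 hq1 q2 hq2 this
  · -- sup = s
    apply le_antisymm
    · apply Finset.sup_le
      intro q hq
      obtain ⟨q1, hq1, rfl⟩ := mem_image.mp hq
      exact hfs q1 hq1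
    · intro x hx
      rw [Finset.mem_sup]
      by_cases hxS : x ∈ S
      · obtain ⟨q, hq, haq⟩ := Pp.exists_mem (mem_union_right _ (mem_singleton_self a))
        refine ⟨f q, mem_image_of_mem f hq, ?_⟩
        simp only [hf, if_pos haq]
        exact mem_union_right _ hxS
      · obtain ⟨q, hq, hxq⟩ := Pp.exists_mem (mem_union_left _ (mem_sdiff.mpr ⟨hx, hxS⟩))
        exact ⟨f q, mem_image_of_mem f hq, hfsup q hxq⟩
  · -- bot not mem
    intro hbot
    obtain ⟨q, hq, hfq⟩ := mem_image.mp hbot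
    obtain ⟨x, hx⟩ := Pp.nonempty_of_mem_parts hq
    have : x ∈ f q := hfsup q hx
    rw [hfq] at this
    exact notMem_empty x this
  · -- card
    show (Pp.parts.image f).card = Pp.parts.card
    exact card_image_of_injOn (fun q1 h1 q2 h2 => hinj q1 h1 q2 h2)
  · -- colors
    intro c1 c2 hP p hp q hq hpq
    simp only [Finpartition.mk] at hp hq
    simp only [mem_image] at hp hq
    obtain ⟨q1, hq1, rfl⟩ := hp
    obtain ⟨q2, hq2, rfl⟩ := hq
    have h12 : q1 ≠ q2 := fun h => hpq (by rw [h])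
    obtain ⟨col, hcol12, hcol⟩ := hP q1 hq1 q2 hq2 h12
    refine ⟨col, hcol12, ?_⟩
    intro u hu v hv
    have hmemu : u ∈ q1 ∨ (a ∈ q1 ∧ u ∈ S) := by
      by_cases h : a ∈ q1
      · simp only [hf, if_pos h] at hu
        rcases mem_union.mp hu with h' | h'
        · exact Or.inl h'
        · exact Or.inr ⟨h, h'⟩
      · simp only [hf, if_neg h] at hu
        exact Or.inl hu
    have hmemv : v ∈ q2 ∨ (a ∈ q2 ∧ v ∈ S) := by
      by_cases h : a ∈ q2
      · simp only [hf, if_pos h] at hv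
        rcases mem_union.mp hv with h' | h'
        · exact Or.inl h'
        · exact Or.inr ⟨h, h'⟩
      · simp only [hf, if_neg h] at hv
        exact Or.inl hv
    rcases hmemu with hu' | ⟨ha1, huS⟩ <;> rcases hmemv with hv' | ⟨ha2, hvS⟩
    · exact hcol u hu' v hv'
    · -- v ∈ S, a ∈ q2 : u sees S like a
      have huS : u ∉ S := by
        intro huS
        have := hs2S u (Pp.le hq1 hu') huS
        subst this
        exact (disjoint_left.mp (hdisj q1 hq1 q2 hq2 h12)) hu' ha2
      have hus : u ∈ s := hs2sub (Pp.le hq1 hu')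
      rw [hmono u hus huS v hvS]
      exact hcol u hu' a ha2
    · -- u ∈ S, a ∈ q1
      have hvS : v ∉ S := by
        intro hvS
        have := hs2S v (Pp.le hq2 hv') hvS
        subst this
        exact (disjoint_left.mp (hdisj q1 hq1 q2 hq2 h12)) ha1 hv'
      have hvs : v ∈ s := hs2sub (Pp.le hq2 hv')
      rw [hsym u v, hmono v hvs hvS u huS, hsym v a]
      exact hcol a ha1 v hv'
    · exact absurd (honea q1 hq1 q2 hq2 ha1 ha2) h12

theorem gallai_main : ∀ n : ℕ, ∀ s : Finset V, ∀ c : V → V → C, IsSymmColoring c →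
    ¬ HasRainbowTriangle c → s.card ≤ n → 2 ≤ s.card →
    ∃ P : Finpartition s, 2 ≤ P.parts.card ∧ ∃ c1 c2 : C,
      ∀ p ∈ P.parts, ∀ q ∈ P.parts, p ≠ q →
        ∃ col : C, (col = c1 ∨ col = c2) ∧ ∀ u ∈ p, ∀ v ∈ q, c u v = col := by
  intro n
  induction n with
  | zero =>
    intro s c _ _ hle h2
    omega
  | succ n ih =>
    intro s c hsym hnr hle h2
    classical
    by_cases hmod : HasModule c s
    · -- contract the module and use induction
      obtain ⟨S, hSsub, hS2, hSlt, a, haS, hmono⟩ := hmod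
      set s2 := (s \ S) ∪ {a} with hs2
      have has : a ∈ s := hSsub haS
      have hanotin : a ∉ s \ S := fun h => (mem_sdiff.mp h).2 haS
      have hcard2 : s2.card = s.card - S.card + 1 := by
        rw [hs2, card_union_of_disjoint (by simp [disjoint_singleton_right, hanotin]),
          card_sdiff_of_subset hSsub, card_singleton]
      have hle2 : s2.card ≤ n := by omega
      have h22 : 2 ≤ s2.card := by
        have : S.card ≤ s.card := card_le_card hSsub
        omega
      obtain ⟨P2, hP2card, c1, c2, hP2⟩ := ih s2 c hsym hnr hle2 h22
      obtain ⟨Q, hQcard, hQ⟩ := expand_partition hsym hSsub haS hmono P2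
      exact ⟨Q, hQcard ▸ hP2card, c1, c2, hQ c1 c2 hP2⟩
    · -- no module
      obtain ⟨u0, v0, hu0, hv0, huv0⟩ := one_lt_card_iff.mp h2
      by_cases hone : ∀ u ∈ s, ∀ v ∈ s, u ≠ v → c u v = c u0 v0
      · -- one color: discrete partition
        refine ⟨⊥, by rwa [Finpartition.card_bot], c u0 v0, c u0 v0, ?_⟩
        intro p hp q hq hpq
        rw [Finpartition.mem_bot_iff] at hp hq
        obtain ⟨x, hx, rfl⟩ := hp
        obtain ⟨y, hy, rfl⟩ := hq
        have hxy : x ≠ y := fun h => hpq (by rw [h])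
        refine ⟨c x y, Or.inl (hone x hx y hy hxy), ?_⟩
        intro u hu v hv
        rw [mem_singleton.mp hu, mem_singleton.mp hv]
      · push_neg at hone
        obtain ⟨u1, hu1, v1, hv1, huv1, hc2ne⟩ := hone
        by_cases htwo : ∀ u ∈ s, ∀ v ∈ s, u ≠ v → c u v = c u0 v0 ∨ c u v = c u1 v1
        · -- two colors: discrete partition
          refine ⟨⊥, by rwa [Finpartition.card_bot], c u0 v0, c u1 v1, ?_⟩
          intro p hp q hq hpq
          rw [Finpartition.mem_bot_iff] at hp hq
          obtain ⟨x, hx, rfl⟩ := hp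
          obtain ⟨y, hy, rfl⟩ := hq
          have hxy : x ≠ y := fun h => hpq (by rw [h])
          refine ⟨c x y, htwo x hx y hy hxy, ?_⟩
          intro u hu v hv
          rw [mem_singleton.mp hu, mem_singleton.mp hv]
        · -- at least three colors: contradiction via noBad
          exfalso
          push_neg at htwo
          obtain ⟨u2, hu2, v2, hv2, huv2, hg1, hg2⟩ := htwo
          set r := c u0 v0 with hr
          set b := c u1 v1 with hb
          set g := c u2 v2 with hg
          set F : C → C := fun d => if d = r then r else if d = b then b else g with hF
          set ct : V → V → C := fun u v => F (c u v) with hct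
          have hctsym : IsSymmColoring ct := by
            intro u v
            simp only [hct]
            rw [hsym u v]
          have hctnr : ¬ HasRainbowTriangle ct := by
            rintro ⟨u, v, w, h1, h2, h3, d1, d2, d3⟩
            exact hnr ⟨u, v, w, h1, h2, h3,
              fun e => d1 (by simp only [hct]; rw [e]),
              fun e => d2 (by simp only [hct]; rw [e]),
              fun e => d3 (by simp only [hct]; rw [e])⟩
          have hFr : F r = r := if_pos rfl
          have hFb : F b = b := by
            rw [hF]
            simp [hc2ne]
          have hFg : F g = g := by
            rw [hF]
            simp [hg1, hg2]
          have hcol : ∀ u ∈ s, ∀ v ∈ s, u ≠ v → ct u v = r ∨ ct u v = b ∨ ct u v = g := by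
            intro u _ v _ _
            simp only [hct, hF]
            split
            · exact Or.inl rfl
            · split
              · exact Or.inr (Or.inl rfl)
              · exact Or.inr (Or.inr rfl)
          -- spanning connectivity of the three merged classes
          have hspan : ∀ Fp : C → Prop, ∀ a a' : V, a ∈ s → a' ∈ s → a ≠ a' → Fp (c a a') →
              ∀ u ∈ s, ∀ v ∈ s, GWalk c s Fp u v :=
            fun Fp a a' ha ha' haa hFp => spanning_of_noModule hsym hnr hmod ha ha' haa hFp
          have htrans : ∀ i : C, (∀ d : C, (fun d => _root_.id (d = i) : C → Prop) d → True) → True := fun _ _ => trivial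
          have hwalkr : Conn ct s r := by
            intro u hu v hv
            have := hspan (fun d => d = r) u0 v0 hu0 hv0 huv0 rfl u hu v hv
            refine Relation.ReflTransGen.mono ?_ _ _ this
            rintro x y ⟨hx, hy, hxy, hFxy⟩
            exact ⟨hx, hy, hxy, by simp only [hct]; rw [hFxy]; exact hFr⟩
          have hwalkb : Conn ct s b := by
            intro u hu v hv
            have := hspan (fun d => d = b) u1 v1 hu1 hv1 huv1 rfl u hu v hv
            refine Relation.ReflTransGen.mono ?_ _ _ this
            rintro x y ⟨hx, hy, hxy, hFxy⟩
            exact ⟨hx, hy, hxy, by simp only [hct]; rw [hFxy]; exact hFb⟩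
          have hwalkg : Conn ct s g := by
            intro u hu v hv
            have := hspan (fun d => ¬ (d = r) ∧ ¬ (d = b)) u2 v2 hu2 hv2 huv2 ⟨hg1, hg2⟩ u hu v hv
            refine Relation.ReflTransGen.mono ?_ _ _ this
            rintro x y ⟨hx, hy, hxy, hFxy⟩
            refine ⟨hx, hy, hxy, ?_⟩
            simp only [hct, hF]
            rw [if_neg hFxy.1, if_neg hFxy.2]
          have hrb : r ≠ b := fun h => hc2ne h.symm
          have hrg : r ≠ g := fun h => hg1 h.symm
          have hbg : b ≠ g := fun h => hg2 h.symm
          exact noBad s.card s ct hctsym hctnr r b g hrb hrg hbg hcol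
            ⟨u0, hu0, v0, hv0, huv0, by simp only [hct]; rw [← hr]; exact hFr⟩
            ⟨u1, hu1, v1, hv1, huv1, by simp only [hct]; rw [← hb]; exact hFb⟩
            ⟨u2, hu2, v2, hv2, huv2, by simp only [hct]; rw [← hg]; exact hFg⟩
            hwalkr hwalkb hwalkg le_rfl

end Gallai

/-- Gallai's theorem: any rainbow-triangle-free edge coloring of a complete graph
on at least two vertices admits a nontrivial Gallai partition. -/
theorem stmt_0 {V C : Type*} [Fintype V] [DecidableEq V]
    (h2 : 2 ≤ Fintype.card V) (c : V → V → C) (hsym : IsSymmColoring c)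
    (hnr : ¬ HasRainbowTriangle c) :
    ∃ P : Finpartition (univ : Finset V), 2 ≤ P.parts.card ∧
      ∃ c1 c2 : C, ∀ p ∈ P.parts, ∀ q ∈ P.parts, p ≠ q →
        ∃ col : C, (col = c1 ∨ col = c2) ∧ ∀ u ∈ p, ∀ v ∈ q, c u v = col := by
  exact gallai_main (univ : Finset V).card univ c hsym hnr le_rfl
    (by rwa [Finset.card_univ])
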